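/- Let θ_t be a discrete random variable, let X_{t+1} be an independent copy of θ_0, B_{t+1} ~ Bernoulli(q) independent of everything else, H_t arbitrary observations independent of (B_{t+1}, X_{t+1}) given θ_t, and θ_{t+1} = (1−B_{t+1})θ_t + B_{t+1} X_{t+1}. Then H(θ_{t+1}|H_t) − H(θ_t|H_t) ≤ H(B_{t+1}) + q·H(θ_0). -/
import Mathlib


open MeasureTheory ProbabilityTheory Real

/-- Shannon entropy (in nats) of a random variable `X` taking values in a finite type. -/
noncomputable def ent {Ω S : Type*} [MeasurableSpace Ω] [Fintype S]
    (μ : Measure Ω) (X : Ω → S) : ℝ :=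
  - ∑ s : S, (μ (X ⁻¹' {s})).toReal * Real.log (μ (X ⁻¹' {s})).toReal

/-- Conditional entropy `H(X | Y)`. -/
noncomputable def condEnt {Ω S T : Type*} [MeasurableSpace Ω] [Fintype S] [Fintype T]
    (μ : Measure Ω) (X : Ω → S) (Y : Ω → T) : ℝ :=
  ent μ (fun ω => (X ω, Y ω)) - ent μ Y

/-- Mutual information `I(X ; Y)`. -/
noncomputable def mi {Ω S T : Type*} [MeasurableSpace Ω] [Fintype S] [Fintype T]
    (μ : Measure Ω) (X : Ω → S) (Y : Ω → T) : ℝ :=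
  ent μ X - condEnt μ X Y

/-- Conditional mutual information `I(X ; Y | Z)`. -/
noncomputable def condMI {Ω S T U : Type*} [MeasurableSpace Ω] [Fintype S] [Fintype T] [Fintype U]
    (μ : Measure Ω) (X : Ω → S) (Y : Ω → T) (Z : Ω → U) : ℝ :=
  condEnt μ X Z - condEnt μ X (fun ω => (Y ω, Z ω))

/-- `X` and `Z` are conditionally independent given `Y`:
`P(X = s, Z = u | Y = t) = P(X = s | Y = t) * P(Z = u | Y = t)` for every `s, t, u`. -/
def CondIndepDiscrete {Ω S T U : Type*} [MeasurableSpace Ω] [Fintype S] [Fintype T] [Fintype U]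
    (μ : Measure Ω) (X : Ω → S) (Z : Ω → U) (Y : Ω → T) : Prop :=
  ∀ (s : S) (u : U) (t : T),
    μ (X ⁻¹' {s} ∩ Z ⁻¹' {u} ∩ Y ⁻¹' {t}) * μ (Y ⁻¹' {t}) =
      μ (X ⁻¹' {s} ∩ Y ⁻¹' {t}) * μ (Z ⁻¹' {u} ∩ Y ⁻¹' {t})

lemma my_negMulLog_sum_le {ι : Type*} (s : Finset ι) (a : ι → ℝ) (ha : ∀ i ∈ s, 0 ≤ a i) :
    Real.negMulLog (∑ i ∈ s, a i) ≤ ∑ i ∈ s, Real.negMulLog (a i) := by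
  rcases eq_or_lt_of_le (Finset.sum_nonneg ha) with h0 | hpos
  · have hz : ∀ i ∈ s, a i = 0 := (Finset.sum_eq_zero_iff_of_nonneg ha).mp h0.symm
    rw [← h0, Real.negMulLog_zero]
    rw [Finset.sum_congr rfl (fun i hi => by rw [hz i hi])]
    simp [Real.negMulLog_zero]
  · have key : Real.negMulLog (∑ i ∈ s, a i)
        = ∑ i ∈ s, -(a i * Real.log (∑ j ∈ s, a j)) := by
      simp only [Real.negMulLog, neg_mul]
      rw [Finset.sum_neg_distrib, ← Finset.sum_mul]
    rw [key]
    apply Finset.sum_le_sum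
    intro i hi
    rcases eq_or_lt_of_le (ha i hi) with h0i | hposi
    · simp [Real.negMulLog, ← h0i]
    · have hle : a i ≤ ∑ j ∈ s, a j := Finset.single_le_sum ha hi
      have : Real.log (a i) ≤ Real.log (∑ j ∈ s, a j) := Real.log_le_log hposi hle
      simp only [Real.negMulLog, neg_mul]
      nlinarith

lemma my_ent_eq_sum {Ω A : Type*} [MeasurableSpace Ω] [Fintype A]
    (μ : Measure Ω) (Z : Ω → A) :
    ent μ Z = ∑ a, Real.negMulLog ((μ (Z ⁻¹' {a})).toReal) := by
  simp [ent, Real.negMulLog, neg_mul, Finset.sum_neg_distrib]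

lemma my_sum_measure_preimage {Ω A : Type*} [MeasurableSpace Ω] [Fintype A] [DecidableEq A]
    (μ : Measure Ω) [IsProbabilityMeasure μ] (Z : Ω → A)
    (hZ : ∀ a, MeasurableSet (Z ⁻¹' {a})) : ∑ a, μ (Z ⁻¹' {a}) = 1 := by
  have hu : ⋃ a ∈ (Finset.univ : Finset A), Z ⁻¹' {a} = Set.univ := by
    ext ω; simp
  rw [← measure_biUnion_finset ?_ (fun a _ => hZ a), hu, measure_univ]
  intro a _ b _ hab
  exact Set.disjoint_left.mpr (fun ω h1 h2 => hab (by simp_all))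

lemma my_sum_toReal_measure_preimage {Ω A : Type*} [MeasurableSpace Ω] [Fintype A] [DecidableEq A]
    (μ : Measure Ω) [IsProbabilityMeasure μ] (Z : Ω → A)
    (hZ : ∀ a, MeasurableSet (Z ⁻¹' {a})) : ∑ a, (μ (Z ⁻¹' {a})).toReal = 1 := by
  rw [← ENNReal.toReal_sum (fun a _ => measure_ne_top μ _), my_sum_measure_preimage μ Z hZ]
  simp

lemma my_measure_preimage_comp {Ω A C : Type*} [MeasurableSpace Ω] [Fintype A]
    [DecidableEq A] [DecidableEq C]
    (μ : Measure Ω) (Z : Ω → A) (g : A → C)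
    (hZ : ∀ a, MeasurableSet (Z ⁻¹' {a})) (c : C) :
    μ ((fun ω => g (Z ω)) ⁻¹' {c})
      = ∑ a ∈ Finset.univ.filter (fun a => g a = c), μ (Z ⁻¹' {a}) := by
  rw [← measure_biUnion_finset ?_ (fun a _ => hZ a)]
  · congr 1
    ext ω
    simp
  · intro a _ b _ hab
    exact Set.disjoint_left.mpr (fun ω h1 h2 => hab (by simp_all))

lemma my_ent_comp_le {Ω A C : Type*} [MeasurableSpace Ω] [Fintype A] [Fintype C]
    [DecidableEq A] [DecidableEq C]
    (μ : Measure Ω) [IsProbabilityMeasure μ] (Z : Ω → A) (g : A → C)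
    (hZ : ∀ a, MeasurableSet (Z ⁻¹' {a})) :
    ent μ (fun ω => g (Z ω)) ≤ ent μ Z := by
  rw [my_ent_eq_sum, my_ent_eq_sum]
  rw [← Finset.sum_fiberwise Finset.univ g (fun a => Real.negMulLog ((μ (Z ⁻¹' {a})).toReal))]
  apply Finset.sum_le_sum
  intro c _
  rw [my_measure_preimage_comp μ Z g hZ c,
    ENNReal.toReal_sum (fun a _ => measure_ne_top μ _)]
  exact my_negMulLog_sum_le _ _ (fun a _ => ENNReal.toReal_nonneg)

lemma my_sum_negMulLog_const_mul {ι : Type*} [Fintype ι] (c : ℝ) (a : ι → ℝ)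
    (ha : ∑ i, a i = 1) :
    ∑ i, Real.negMulLog (c * a i)
      = Real.negMulLog c + c * ∑ i, Real.negMulLog (a i) := by
  simp only [Real.negMulLog_mul]
  rw [Finset.sum_add_distrib, ← Finset.sum_mul, ← Finset.mul_sum, ha, one_mul]

/-- With `θ_{t+1} = (1−B_{t+1})θ_t + B_{t+1}X_{t+1}`, where `(B_{t+1}, X_{t+1})` is
independent of `(θ_t, H_t)`, `B_{t+1} ~ Bernoulli(q)`, and `X_{t+1}` distributed as `θ_0`, we have
`H(θ_{t+1}|H_t) − H(θ_t|H_t) ≤ H(B_{t+1}) + q·H(θ_0)`. -/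
theorem condEnt_increase_le
    {Ω S V : Type*} [MeasurableSpace Ω]
    [Fintype S] [MeasurableSpace S] [MeasurableSingletonClass S]
    [Fintype V] [MeasurableSpace V] [MeasurableSingletonClass V]
    (μ : Measure Ω) [IsProbabilityMeasure μ]
    (θt θ0 X : Ω → S) (B : Ω → Bool) (Ht : Ω → V) (q : ℝ)
    (hθt : Measurable θt) (hθ0 : Measurable θ0) (hX : Measurable X)
    (hB : Measurable B) (hHt : Measurable Ht)
    (hq0 : 0 ≤ q) (hq1 : q ≤ 1)
    (hBq : μ (B ⁻¹' {true}) = ENNReal.ofReal q)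
    (hindep : IndepFun (fun ω => (B ω, X ω)) (fun ω => (θt ω, Ht ω)) μ)
    (hBX : IndepFun B X μ)
    (hid : ∀ s : S, μ (X ⁻¹' {s}) = μ (θ0 ⁻¹' {s})) :
    condEnt μ (fun ω => if B ω then X ω else θt ω) Ht - condEnt μ θt Ht ≤
      ent μ B + q * ent μ θ0 := by
  classical
  have h1q : (0:ℝ) ≤ 1 - q := by linarith
  set θ' : Ω → S := fun ω => if B ω then X ω else θt ω with hθ'def
  set TH : Ω → S × V := fun ω => (θt ω, Ht ω) with hTHdef
  set BX : Ω → Bool × S := fun ω => (B ω, X ω) with hBXdef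
  set tri : Ω → S × (Bool × V) := fun ω => (θ' ω, (B ω, Ht ω)) with htridef
  have hBt : MeasurableSet (B ⁻¹' {true}) := hB (measurableSet_singleton true)
  have hθ'm : Measurable θ' := by
    exact Measurable.ite hBt hX hθt
  have hTHm : ∀ p : S × V, MeasurableSet (TH ⁻¹' {p}) := by
    rintro ⟨s, v⟩
    have h : TH ⁻¹' {(s, v)} = θt ⁻¹' {s} ∩ Ht ⁻¹' {v} := by
      ext ω; simp [hTHdef, Prod.ext_iff]
    rw [h]
    exact (hθt (measurableSet_singleton s)).inter (hHt (measurableSet_singleton v))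
  have htrim : ∀ p : S × (Bool × V), MeasurableSet (tri ⁻¹' {p}) := by
    rintro ⟨s, b, v⟩
    have h : tri ⁻¹' {(s, (b, v))} = θ' ⁻¹' {s} ∩ (B ⁻¹' {b} ∩ Ht ⁻¹' {v}) := by
      ext ω; simp [htridef, Prod.ext_iff, and_assoc]
    rw [h]
    exact (hθ'm (measurableSet_singleton s)).inter
      ((hB (measurableSet_singleton b)).inter (hHt (measurableSet_singleton v)))
  -- P(B = false)
  have hcompl : B ⁻¹' {false} = (B ⁻¹' {true})ᶜ := by
    ext ω; cases h : B ω <;> simp [h]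
  have hBf : μ (B ⁻¹' {false}) = ENNReal.ofReal (1 - q) := by
    rw [hcompl, measure_compl hBt (measure_ne_top μ _), measure_univ, hBq,
      ENNReal.ofReal_sub 1 hq0, ENNReal.ofReal_one]
  -- joint law of the triple, B = true part
  have hsetT : ∀ (s : S) (v : V), tri ⁻¹' {(s, (true, v))}
      = (BX ⁻¹' {(true, s)}) ∩ (TH ⁻¹' (Set.univ ×ˢ {v})) := by
    intro s v; ext ω
    cases h : B ω <;> simp [htridef, hBXdef, hTHdef, hθ'def, h, Prod.ext_iff] <;> tauto
  have hPtrue : ∀ (s : S) (v : V),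
      μ (tri ⁻¹' {(s, (true, v))})
        = ENNReal.ofReal q * μ (θ0 ⁻¹' {s}) * μ (Ht ⁻¹' {v}) := by
    intro s v
    have hm1 : MeasurableSet ({(true, s)} : Set (Bool × S)) := by
      rw [show ({(true, s)} : Set (Bool × S)) = {true} ×ˢ {s} by
        rw [Set.singleton_prod_singleton]]
      exact (measurableSet_singleton _).prod (measurableSet_singleton _)
    have hm2 : MeasurableSet ((Set.univ : Set S) ×ˢ ({v} : Set V)) :=
      MeasurableSet.univ.prod (measurableSet_singleton v)
    rw [hsetT s v, hindep.measure_inter_preimage_eq_mul _ _ hm1 hm2]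
    have h1 : BX ⁻¹' {(true, s)} = B ⁻¹' {true} ∩ X ⁻¹' {s} := by
      ext ω; simp [hBXdef, Prod.ext_iff]
    have h2 : TH ⁻¹' ((Set.univ : Set S) ×ˢ ({v} : Set V)) = Ht ⁻¹' {v} := by
      ext ω; simp [hTHdef, eq_comm]
    rw [h1, h2, hBX.measure_inter_preimage_eq_mul _ _ (measurableSet_singleton _)
      (measurableSet_singleton _), hBq, hid s]
  -- joint law of the triple, B = false part
  have hsetF : ∀ (s : S) (v : V), tri ⁻¹' {(s, (false, v))}
      = (BX ⁻¹' (({false} : Set Bool) ×ˢ Set.univ)) ∩ (TH ⁻¹' {(s, v)}) := by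
    intro s v; ext ω
    cases h : B ω <;> simp [htridef, hBXdef, hTHdef, hθ'def, h, Prod.ext_iff] <;> tauto
  have hPfalse : ∀ (s : S) (v : V),
      μ (tri ⁻¹' {(s, (false, v))}) = ENNReal.ofReal (1 - q) * μ (TH ⁻¹' {(s, v)}) := by
    intro s v
    have hm1 : MeasurableSet (({false} : Set Bool) ×ˢ (Set.univ : Set S)) :=
      (measurableSet_singleton _).prod MeasurableSet.univ
    have hm2 : MeasurableSet ({(s, v)} : Set (S × V)) := by
      rw [show ({(s, v)} : Set (S × V)) = {s} ×ˢ {v} by rw [Set.singleton_prod_singleton]]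
      exact (measurableSet_singleton _).prod (measurableSet_singleton _)
    rw [hsetF s v, hindep.measure_inter_preimage_eq_mul _ _ hm1 hm2]
    have h1 : BX ⁻¹' (({false} : Set Bool) ×ˢ (Set.univ : Set S)) = B ⁻¹' {false} := by
      ext ω; simp [hBXdef]
    rw [h1, hBf]
  -- normalizations
  have hP0 : ∑ s : S, (μ (θ0 ⁻¹' {s})).toReal = 1 :=
    my_sum_toReal_measure_preimage μ θ0 (fun s => hθ0 (measurableSet_singleton s))
  have hHsum : ∑ v : V, (μ (Ht ⁻¹' {v})).toReal = 1 :=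
    my_sum_toReal_measure_preimage μ Ht (fun v => hHt (measurableSet_singleton v))
  have hTHsum : ∑ p : S × V, (μ (TH ⁻¹' {p})).toReal = 1 :=
    my_sum_toReal_measure_preimage μ TH hTHm
  -- entropy of the triple
  have hEtriple : ent μ tri = Real.negMulLog q + Real.negMulLog (1 - q)
      + q * ent μ θ0 + q * ent μ Ht + ent μ TH - q * ent μ TH := by
    rw [my_ent_eq_sum]
    rw [Fintype.sum_prod_type]
    simp only [Fintype.sum_prod_type, Fintype.sum_bool]
    simp only [hPtrue, hPfalse, ENNReal.toReal_mul, ENNReal.toReal_ofReal hq0,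
      ENNReal.toReal_ofReal h1q]
    rw [Finset.sum_add_distrib]
    have h1 : ∀ s : S,
        ∑ v : V, Real.negMulLog (q * (μ (θ0 ⁻¹' {s})).toReal * (μ (Ht ⁻¹' {v})).toReal)
          = Real.negMulLog (q * (μ (θ0 ⁻¹' {s})).toReal)
            + q * (μ (θ0 ⁻¹' {s})).toReal * ent μ Ht := by
      intro s
      rw [my_sum_negMulLog_const_mul _ _ hHsum, ← my_ent_eq_sum]
    rw [Finset.sum_congr rfl (fun s _ => h1 s), Finset.sum_add_distrib,
      my_sum_negMulLog_const_mul _ _ hP0, ← my_ent_eq_sum,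
      ← Finset.sum_mul, ← Finset.mul_sum, hP0, mul_one]
    have h2 : (∑ p : S × V, Real.negMulLog ((1 - q) * (μ (TH ⁻¹' {p})).toReal))
        = Real.negMulLog (1 - q) + (1 - q) * ent μ TH := by
      rw [my_sum_negMulLog_const_mul _ _ hTHsum, ← my_ent_eq_sum]
    have h2' : ∑ s : S, ∑ v : V, Real.negMulLog ((1 - q) * (μ (TH ⁻¹' {(s, v)})).toReal)
        = Real.negMulLog (1 - q) + (1 - q) * ent μ TH := by
      rw [← h2, Fintype.sum_prod_type]
    rw [h2']
    ring
  -- entropy of B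
  have hentB : ent μ B = Real.negMulLog q + Real.negMulLog (1 - q) := by
    rw [my_ent_eq_sum, Fintype.sum_bool, hBq, hBf, ENNReal.toReal_ofReal hq0,
      ENNReal.toReal_ofReal h1q]
  -- data processing
  have hE2le : ent μ (fun ω => (θ' ω, Ht ω)) ≤ ent μ tri := by
    have := my_ent_comp_le μ tri (fun p => (p.1, p.2.2)) htrim
    simpa [htridef] using this
  have hHHle : ent μ Ht ≤ ent μ TH := by
    have := my_ent_comp_le μ TH Prod.snd hTHm
    simpa [hTHdef] using this
  have hq2 : q * ent μ Ht ≤ q * ent μ TH := mul_le_mul_of_nonneg_left hHHle hq0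
  simp only [condEnt]
  linarith [hE2le, hEtriple, hentB, hq2]
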